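/- Let G = (V,E) be a finite simple graph with |V| = n, let 1/3 ≤ α ≤ 1 and 0 < ε < 1, and let k be an integer with k + ⌈4k/ε²⌉ ≤ n. Let V' ⊆ V be a set of k + ⌈4k/ε²⌉ vertices of largest degrees (d(u) ≥ d(w) for all u ∈ V', w ∈ V∖V'). Let O ⊆ V with |O| = k satisfy cov_α(O) ≥ cov_α(O') for every O' ⊆ V with |O'| = k. Set O_i := O ∩ V', O_o := O ∖ V', U := V' ∖ O_i, and t := |O_o|. Then the average of cov_α(O_i ∪ T) over all t-element subsets T of U is at least (1−ε)·cov_α(O); that is, (1/C(|U|,t)) · Σ_{T ⊆ U, |T| = t} cov_α(O_i ∪ T) ≥ (1−ε)·cov_α(O). -/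

import Mathlib

open Finset

/-- Number of edges of `G` with both endpoints in `X`. -/
noncomputable def mIn {V : Type*} (G : SimpleGraph V) (X : Finset V) : ℕ :=
  {e ∈ G.edgeSet | ∀ v ∈ e, v ∈ X}.ncard

/-- Number of edges of `G` with one endpoint in `X` and the other in `Y`. -/
noncomputable def mBtw {V : Type*} (G : SimpleGraph V) (X Y : Finset V) : ℕ :=
  {e ∈ G.edgeSet | ∃ u ∈ X, ∃ w ∈ Y, e = s(u, w)}.ncard

/-- `cov_α(S) = (1-α)·m(S) + α·m(S, V∖S)`. -/
noncomputable def cov {V : Type*} [Fintype V] [DecidableEq V] (G : SimpleGraph V) (α : ℝ)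
    (S : Finset V) : ℝ :=
  (1 - α) * mIn G S + α * mBtw G S Sᶜ

section Helpers

attribute [local instance] Classical.propDecidable
set_option linter.unusedSectionVars false

variable {V : Type*} [Fintype V] [DecidableEq V] (G : SimpleGraph V) [DecidableRel G.Adj]

lemma mIn_eq (X : Finset V) :
    mIn G X = (G.edgeFinset.filter (fun e => ∀ v ∈ e, v ∈ X)).card := by
  rw [mIn, ← Set.ncard_coe_finset]
  congr 1
  ext e
  simp [SimpleGraph.mem_edgeFinset]

lemma mBtw_eq (X Y : Finset V) :
    mBtw G X Y = (G.edgeFinset.filter (fun e => ∃ u ∈ X, ∃ w ∈ Y, e = s(u, w))).card := by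
  rw [mBtw, ← Set.ncard_coe_finset]
  congr 1
  ext e
  simp [SimpleGraph.mem_edgeFinset]

lemma edge_cases {e : Sym2 V} (he : e ∈ G.edgeFinset) :
    ∃ a b : V, a ≠ b ∧ G.Adj a b ∧ e = s(a, b) := by
  induction e with
  | _ a b =>
    rw [SimpleGraph.mem_edgeFinset, SimpleGraph.mem_edgeSet] at he
    exact ⟨a, b, he.ne, he, rfl⟩

lemma handshake (X : Finset V) :
    ∑ v ∈ X, G.degree v = 2 * mIn G X + mBtw G X Xᶜ := by
  rw [mIn_eq, mBtw_eq, card_filter, card_filter, Finset.mul_sum, ← Finset.sum_add_distrib]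
  have hdeg : ∀ v ∈ X, G.degree v = ∑ e ∈ G.edgeFinset, if v ∈ e then 1 else 0 := by
    intro v _
    rw [← SimpleGraph.card_incidenceFinset_eq_degree, SimpleGraph.incidenceFinset_eq_filter,
      card_filter]
  rw [Finset.sum_congr rfl hdeg, Finset.sum_comm]
  refine Finset.sum_congr rfl (fun e he => ?_)
  obtain ⟨a, b, hab, hadj, rfl⟩ := edge_cases G he
  by_cases ha : a ∈ X <;> by_cases hb : b ∈ X <;>
    simp [Sym2.mem_iff, Finset.sum_ite_eq', ha, hb, Finset.sum_boole,
      Finset.filter_or, Finset.filter_eq']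
  · have hc : ¬ (∃ u ∈ X, ∃ w ∉ X, a = u ∧ b = w ∨ a = w ∧ b = u) := by
      rintro ⟨u, hu, w, hw, (⟨rfl, rfl⟩ | ⟨rfl, rfl⟩)⟩ <;> contradiction
    simp [Finset.card_pair hab]
    intro x hx y hy
    exact ⟨fun _ h => hy (h ▸ hb), fun h _ => hy (h ▸ ha)⟩
  · exact ⟨a, ha, b, hb, fun h => absurd rfl (h rfl)⟩
  · exact ⟨b, hb, a, ha, fun _ => ⟨rfl, rfl⟩⟩
  · have hc : ¬ (∃ u ∈ X, ∃ w ∉ X, a = u ∧ b = w ∨ a = w ∧ b = u) := by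
      rintro ⟨u, hu, w, hw, (⟨rfl, rfl⟩ | ⟨rfl, rfl⟩)⟩ <;> contradiction
    intro x hx y hy
    exact ⟨fun h => (ha (h ▸ hx)).elim, fun _ h => (hb (h ▸ hx)).elim⟩

lemma cov_eq (α : ℝ) (X : Finset V) :
    cov G α X = α * (∑ v ∈ X, (G.degree v : ℝ)) - (3 * α - 1) * mIn G X := by
  have h := handshake G X
  have h2 : (mBtw G X Xᶜ : ℝ) = (∑ v ∈ X, (G.degree v : ℝ)) - 2 * (mIn G X : ℝ) := by
    have := congrArg (Nat.cast : ℕ → ℝ) h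
    push_cast at this
    linarith
  rw [cov, h2]
  ring

lemma mIn_mono {X Y : Finset V} (h : X ⊆ Y) : mIn G X ≤ mIn G Y := by
  rw [mIn_eq, mIn_eq]
  apply card_le_card
  intro e he
  rw [mem_filter] at he ⊢
  exact ⟨he.1, fun v hv => h (he.2 v hv)⟩

lemma mBtw_mono_right {X Y Y' : Finset V} (h : Y ⊆ Y') : mBtw G X Y ≤ mBtw G X Y' := by
  rw [mBtw_eq, mBtw_eq]
  apply card_le_card
  intro e he
  rw [mem_filter] at he ⊢
  obtain ⟨he1, u, hu, w, hw, rfl⟩ := he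
  exact ⟨he1, u, hu, w, h hw, rfl⟩

lemma mBtw_comm (X Y : Finset V) : mBtw G X Y = mBtw G Y X := by
  rw [mBtw_eq, mBtw_eq]
  congr 1
  apply filter_congr
  intro e _
  constructor
  · rintro ⟨u, hu, w, hw, rfl⟩; exact ⟨w, hw, u, hu, Sym2.eq_swap⟩
  · rintro ⟨u, hu, w, hw, rfl⟩; exact ⟨w, hw, u, hu, Sym2.eq_swap⟩

lemma count_supersets {α' : Type*} [DecidableEq α'] (U S₀ : Finset α') (hS : S₀ ⊆ U) {t : ℕ}
    (h : S₀.card ≤ t) :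
    ((U.powersetCard t).filter (fun T => S₀ ⊆ T)).card
      = (U.card - S₀.card).choose (t - S₀.card) := by
  classical
  rw [← card_sdiff_of_subset hS, ← card_powersetCard]
  apply Finset.card_bij (fun T _ => T \ S₀)
  · intro T hT
    simp only [mem_filter, mem_powersetCard] at hT
    obtain ⟨⟨hTU, hTc⟩, hST⟩ := hT
    rw [mem_powersetCard]
    exact ⟨sdiff_subset_sdiff hTU (Finset.Subset.refl _), by rw [card_sdiff_of_subset hST, hTc]⟩
  · intro T1 h1 T2 h2 heq
    simp only [mem_filter, mem_powersetCard] at h1 h2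
    rw [← sdiff_union_of_subset h1.2, ← sdiff_union_of_subset h2.2, heq]
  · intro T' hT'
    rw [mem_powersetCard] at hT'
    obtain ⟨hsub, hcard⟩ := hT'
    have hdisj : Disjoint T' S₀ := disjoint_of_subset_left hsub sdiff_disjoint
    refine ⟨T' ∪ S₀, ?_, ?_⟩
    · simp only [mem_filter, mem_powersetCard]
      refine ⟨⟨union_subset (hsub.trans sdiff_subset) hS, ?_⟩, subset_union_right⟩
      rw [card_union_of_disjoint hdisj, hcard]
      omega
    · rw [union_sdiff_right, sdiff_eq_self_of_disjoint hdisj]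

lemma count_supersets_zero {α' : Type*} [DecidableEq α'] (U S₀ : Finset α') {t : ℕ}
    (h : t < S₀.card) :
    ((U.powersetCard t).filter (fun T => S₀ ⊆ T)).card = 0 := by
  classical
  rw [card_eq_zero, Finset.eq_empty_iff_forall_notMem]
  intro T hT
  simp only [mem_filter, mem_powersetCard] at hT
  have := card_le_card hT.2
  omega

lemma sum_mIn (Oi U : Finset V) (hd : Disjoint Oi U) {t : ℕ} (ht : 1 ≤ t) (htu : t ≤ U.card) :
    ∑ T ∈ U.powersetCard t, mIn G (Oi ∪ T)
      = U.card.choose t * mIn G Oi + (U.card - 1).choose (t - 1) * mBtw G Oi U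
        + (if 2 ≤ t then (U.card - 2).choose (t - 2) else 0) * mIn G U := by
  have key : ∀ e ∈ G.edgeFinset,
      ((U.powersetCard t).filter (fun T => ∀ v ∈ e, v ∈ Oi ∪ T)).card
      = U.card.choose t * (if ∀ v ∈ e, v ∈ Oi then 1 else 0)
        + (U.card - 1).choose (t - 1) * (if ∃ u ∈ Oi, ∃ w ∈ U, e = s(u, w) then 1 else 0)
        + (if 2 ≤ t then (U.card - 2).choose (t - 2) else 0)
            * (if ∀ v ∈ e, v ∈ U then 1 else 0) := by
    intro e he
    obtain ⟨a, b, hab, hadj, rfl⟩ := edge_cases G he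
    have trich : ∀ x : V, x ∈ Oi ∨ x ∈ U ∨ (x ∉ Oi ∧ x ∉ U) := by
      intro x
      by_cases h1 : x ∈ Oi
      · exact Or.inl h1
      by_cases h2 : x ∈ U
      · exact Or.inr (Or.inl h2)
      · exact Or.inr (Or.inr ⟨h1, h2⟩)
    have hOU : ∀ x, x ∈ Oi → x ∉ U := fun x hx => Finset.disjoint_left.mp hd hx
    rcases trich a with ha | ha | ⟨ha1, ha2⟩ <;> rcases trich b with hb | hb | ⟨hb1, hb2⟩
    -- a ∈ Oi, b ∈ Oi
    · rw [Finset.filter_true_of_mem (fun T _ => by simp [Sym2.mem_iff]; tauto),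
        card_powersetCard]
      have i1 : (∀ v ∈ s(a, b), v ∈ Oi) := by simp [Sym2.mem_iff]; tauto
      have i2 : ¬ (∃ u ∈ Oi, ∃ w ∈ U, s(a, b) = s(u, w)) := by
        rintro ⟨u, hu, w, hw, hew⟩
        rw [Sym2.eq_iff] at hew
        rcases hew with ⟨rfl, rfl⟩ | ⟨rfl, rfl⟩
        · exact hOU b hb hw
        · exact hOU a ha hw
      have i3 : ¬ (∀ v ∈ s(a, b), v ∈ U) := by
        intro hh; exact hOU a ha (hh a (by simp))
      rw [if_pos i1, if_neg i2, if_neg i3]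
      ring
    -- a ∈ Oi, b ∈ U
    · have hfe : (U.powersetCard t).filter (fun T => ∀ v ∈ s(a, b), v ∈ Oi ∪ T)
          = (U.powersetCard t).filter (fun T => {b} ⊆ T) := by
        apply filter_congr
        intro T hT
        rw [mem_powersetCard] at hT
        simp only [Sym2.mem_iff, singleton_subset_iff]
        constructor
        · intro hh
          have := hh b (Or.inr rfl)
          rcases Finset.mem_union.mp this with h' | h'
          · exact absurd h' (fun h'' => hOU b h'' hb)
          · exact h'
        · intro hbT v hv
          rcases hv with rfl | rfl
          · exact Finset.mem_union.mpr (Or.inl ha)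
          · exact Finset.mem_union.mpr (Or.inr hbT)
      rw [hfe, count_supersets U {b} (by simpa using hb) (by simpa using ht)]
      have i1 : ¬ (∀ v ∈ s(a, b), v ∈ Oi) := fun hh => hOU b (hh b (by simp)) hb
      have i2 : (∃ u ∈ Oi, ∃ w ∈ U, s(a, b) = s(u, w)) := ⟨a, ha, b, hb, rfl⟩
      have i3 : ¬ (∀ v ∈ s(a, b), v ∈ U) := fun hh => hOU a ha (hh a (by simp))
      rw [if_neg i1, if_pos i2, if_neg i3]
      simp
    -- a ∈ Oi, b nowhere
    · have hfe : (U.powersetCard t).filter (fun T => ∀ v ∈ s(a, b), v ∈ Oi ∪ T) = ∅ := by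
        apply Finset.filter_false_of_mem
        intro T hT hh
        rw [mem_powersetCard] at hT
        have := hh b (by simp)
        rcases Finset.mem_union.mp this with h' | h'
        · exact hb1 h'
        · exact hb2 (hT.1 h')
      rw [hfe]
      have i1 : ¬ (∀ v ∈ s(a, b), v ∈ Oi) := fun hh => hb1 (hh b (by simp))
      have i2 : ¬ (∃ u ∈ Oi, ∃ w ∈ U, s(a, b) = s(u, w)) := by
        rintro ⟨u, hu, w, hw, hew⟩
        rw [Sym2.eq_iff] at hew
        rcases hew with ⟨rfl, rfl⟩ | ⟨rfl, rfl⟩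
        · exact hb2 hw
        · exact hb1 hu
      have i3 : ¬ (∀ v ∈ s(a, b), v ∈ U) := fun hh => hb2 (hh b (by simp))
      rw [if_neg i1, if_neg i2, if_neg i3]
      simp
    -- a ∈ U, b ∈ Oi
    · have hfe : (U.powersetCard t).filter (fun T => ∀ v ∈ s(a, b), v ∈ Oi ∪ T)
          = (U.powersetCard t).filter (fun T => {a} ⊆ T) := by
        apply filter_congr
        intro T hT
        rw [mem_powersetCard] at hT
        simp only [Sym2.mem_iff, singleton_subset_iff]
        constructor
        · intro hh
          have := hh a (Or.inl rfl)
          rcases Finset.mem_union.mp this with h' | h'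
          · exact absurd h' (fun h'' => hOU a h'' ha)
          · exact h'
        · intro haT v hv
          rcases hv with rfl | rfl
          · exact Finset.mem_union.mpr (Or.inr haT)
          · exact Finset.mem_union.mpr (Or.inl hb)
      rw [hfe, count_supersets U {a} (by simpa using ha) (by simpa using ht)]
      have i1 : ¬ (∀ v ∈ s(a, b), v ∈ Oi) := fun hh => hOU a (hh a (by simp)) ha
      have i2 : (∃ u ∈ Oi, ∃ w ∈ U, s(a, b) = s(u, w)) := ⟨b, hb, a, ha, Sym2.eq_swap⟩
      have i3 : ¬ (∀ v ∈ s(a, b), v ∈ U) := fun hh => hOU b hb (hh b (by simp))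
      rw [if_neg i1, if_pos i2, if_neg i3]
      simp
    -- a ∈ U, b ∈ U
    · have hfe : (U.powersetCard t).filter (fun T => ∀ v ∈ s(a, b), v ∈ Oi ∪ T)
          = (U.powersetCard t).filter (fun T => {a, b} ⊆ T) := by
        apply filter_congr
        intro T hT
        rw [mem_powersetCard] at hT
        simp only [Sym2.mem_iff, insert_subset_iff, singleton_subset_iff]
        constructor
        · intro hh
          constructor
          · rcases Finset.mem_union.mp (hh a (Or.inl rfl)) with h' | h'
            · exact absurd h' (fun h'' => hOU a h'' ha)
            · exact h'
          · rcases Finset.mem_union.mp (hh b (Or.inr rfl)) with h' | h'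
            · exact absurd h' (fun h'' => hOU b h'' hb)
            · exact h'
        · rintro ⟨h1, h2⟩ v hv
          rcases hv with rfl | rfl
          · exact Finset.mem_union.mpr (Or.inr h1)
          · exact Finset.mem_union.mpr (Or.inr h2)
      rw [hfe]
      have i1 : ¬ (∀ v ∈ s(a, b), v ∈ Oi) := fun hh => hOU a (hh a (by simp)) ha
      have i2 : ¬ (∃ u ∈ Oi, ∃ w ∈ U, s(a, b) = s(u, w)) := by
        rintro ⟨u, hu, w, hw, hew⟩
        rw [Sym2.eq_iff] at hew
        rcases hew with ⟨rfl, rfl⟩ | ⟨rfl, rfl⟩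
        · exact hOU a hu ha
        · exact hOU b hu hb
      have i3 : (∀ v ∈ s(a, b), v ∈ U) := by
        intro v hv
        rcases Sym2.mem_iff.mp hv with rfl | rfl
        · exact ha
        · exact hb
      rw [if_neg i1, if_neg i2, if_pos i3]
      have hcard2 : ({a, b} : Finset V).card = 2 := by
        rw [card_insert_of_notMem (by simpa using hab), card_singleton]
      by_cases h2t : 2 ≤ t
      · rw [count_supersets U {a, b} (by simp [insert_subset_iff, ha, hb]) (hcard2 ▸ h2t),
          hcard2, if_pos h2t]
        ring
      · rw [count_supersets_zero U {a, b} (by omega), if_neg h2t]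
        ring
    -- a ∈ U, b nowhere
    · have hfe : (U.powersetCard t).filter (fun T => ∀ v ∈ s(a, b), v ∈ Oi ∪ T) = ∅ := by
        apply Finset.filter_false_of_mem
        intro T hT hh
        rw [mem_powersetCard] at hT
        rcases Finset.mem_union.mp (hh b (by simp)) with h' | h'
        · exact hb1 h'
        · exact hb2 (hT.1 h')
      rw [hfe]
      have i1 : ¬ (∀ v ∈ s(a, b), v ∈ Oi) := fun hh => hb1 (hh b (by simp))
      have i2 : ¬ (∃ u ∈ Oi, ∃ w ∈ U, s(a, b) = s(u, w)) := by
        rintro ⟨u, hu, w, hw, hew⟩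
        rw [Sym2.eq_iff] at hew
        rcases hew with ⟨rfl, rfl⟩ | ⟨rfl, rfl⟩
        · exact hb2 hw
        · exact hb1 hu
      have i3 : ¬ (∀ v ∈ s(a, b), v ∈ U) := fun hh => hb2 (hh b (by simp))
      rw [if_neg i1, if_neg i2, if_neg i3]
      simp
    -- a nowhere (three cases for b)
    all_goals {
      have hfe : (U.powersetCard t).filter (fun T => ∀ v ∈ s(a, b), v ∈ Oi ∪ T) = ∅ := by
        apply Finset.filter_false_of_mem
        intro T hT hh
        rw [mem_powersetCard] at hT
        rcases Finset.mem_union.mp (hh a (by simp)) with h' | h'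
        · exact ha1 h'
        · exact ha2 (hT.1 h')
      rw [hfe]
      have i1 : ¬ (∀ v ∈ s(a, b), v ∈ Oi) := fun hh => ha1 (hh a (by simp))
      have i2 : ¬ (∃ u ∈ Oi, ∃ w ∈ U, s(a, b) = s(u, w)) := by
        rintro ⟨u, hu, w, hw, hew⟩
        rw [Sym2.eq_iff] at hew
        rcases hew with ⟨rfl, rfl⟩ | ⟨rfl, rfl⟩
        · exact ha1 hu
        · exact ha2 hw
      have i3 : ¬ (∀ v ∈ s(a, b), v ∈ U) := fun hh => ha2 (hh a (by simp))
      rw [if_neg i1, if_neg i2, if_neg i3]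
      simp
    }
  calc ∑ T ∈ U.powersetCard t, mIn G (Oi ∪ T)
      = ∑ T ∈ U.powersetCard t, ∑ e ∈ G.edgeFinset,
          (if ∀ v ∈ e, v ∈ Oi ∪ T then 1 else 0) := by
        refine Finset.sum_congr rfl (fun T _ => ?_)
        rw [mIn_eq, card_filter]
    _ = ∑ e ∈ G.edgeFinset, ∑ T ∈ U.powersetCard t,
          (if ∀ v ∈ e, v ∈ Oi ∪ T then 1 else 0) := Finset.sum_comm
    _ = ∑ e ∈ G.edgeFinset,
          ((U.powersetCard t).filter (fun T => ∀ v ∈ e, v ∈ Oi ∪ T)).card := by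
        refine Finset.sum_congr rfl (fun e _ => ?_)
        rw [card_filter]
    _ = ∑ e ∈ G.edgeFinset,
          (U.card.choose t * (if ∀ v ∈ e, v ∈ Oi then 1 else 0)
            + (U.card - 1).choose (t - 1) * (if ∃ u ∈ Oi, ∃ w ∈ U, e = s(u, w) then 1 else 0)
            + (if 2 ≤ t then (U.card - 2).choose (t - 2) else 0)
                * (if ∀ v ∈ e, v ∈ U then 1 else 0)) := Finset.sum_congr rfl key
    _ = U.card.choose t * mIn G Oi + (U.card - 1).choose (t - 1) * mBtw G Oi U
        + (if 2 ≤ t then (U.card - 2).choose (t - 2) else 0) * mIn G U := by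
        rw [Finset.sum_add_distrib, Finset.sum_add_distrib, ← Finset.mul_sum, ← Finset.mul_sum,
          ← Finset.mul_sum, mIn_eq, mIn_eq, mBtw_eq, card_filter, card_filter, card_filter]

lemma sum_degSum (Oi U : Finset V) (hd : Disjoint Oi U) {t : ℕ} (ht : 1 ≤ t) :
    ∑ T ∈ U.powersetCard t, ∑ v ∈ Oi ∪ T, G.degree v
      = U.card.choose t * (∑ v ∈ Oi, G.degree v)
        + (U.card - 1).choose (t - 1) * (∑ v ∈ U, G.degree v) := by
  have h1 : ∀ T ∈ U.powersetCard t, ∑ v ∈ Oi ∪ T, G.degree v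
      = (∑ v ∈ Oi, G.degree v) + ∑ v ∈ T, G.degree v := by
    intro T hT
    rw [mem_powersetCard] at hT
    exact Finset.sum_union (disjoint_of_subset_right hT.1 hd)
  rw [Finset.sum_congr rfl h1, Finset.sum_add_distrib, Finset.sum_const, card_powersetCard,
    smul_eq_mul]
  congr 1
  have h2 : ∀ T ∈ U.powersetCard t, ∑ v ∈ T, G.degree v
      = ∑ v ∈ U, (if v ∈ T then G.degree v else 0) := by
    intro T hT
    rw [mem_powersetCard] at hT
    rw [Finset.sum_ite_mem, Finset.inter_eq_right.mpr hT.1]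
  rw [Finset.sum_congr rfl h2, Finset.sum_comm]
  have h3 : ∀ v ∈ U, ∑ T ∈ U.powersetCard t, (if v ∈ T then G.degree v else 0)
      = (U.card - 1).choose (t - 1) * G.degree v := by
    intro v hv
    rw [← Finset.sum_filter]
    rw [Finset.sum_const]
    have : (U.powersetCard t).filter (fun T => v ∈ T)
        = (U.powersetCard t).filter (fun T => {v} ⊆ T) := by
      apply filter_congr; intro T _; simp
    rw [this, count_supersets U {v} (by simpa using hv) (by simpa using ht), smul_eq_mul,
      card_singleton]
  rw [Finset.sum_congr rfl h3, ← Finset.mul_sum]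

lemma cov_nonneg (α : ℝ) (hα0 : 1 / 3 ≤ α) (hα1 : α ≤ 1) (X : Finset V) : 0 ≤ cov G α X := by
  rw [cov]
  have h1 : (0:ℝ) ≤ mIn G X := Nat.cast_nonneg _
  have h2 : (0:ℝ) ≤ mBtw G X Xᶜ := Nat.cast_nonneg _
  nlinarith


set_option maxHeartbeats 1000000 in
lemma final_arith (α ε rC rc1 rc2 rt ru rm rdOi rdU rdOo rA rB rmOi rmO S covO : ℝ)
    (hα0 : 1/3 ≤ α) (hα1 : α ≤ 1) (hε0 : 0 < ε) (hε1 : ε < 1)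
    (hCnn : 0 ≤ rC) (hc1nn : 0 ≤ rc1) (hc2nn : 0 ≤ rc2)
    (hAnn : 0 ≤ rA) (hBnn : 0 ≤ rB) (hmOinn : 0 ≤ rmOi)
    (htR : 1 ≤ rt) (hu2 : 2 ≤ ru)
    (e1R : ru * rc1 = rC * rt)
    (e2R : (ru - 1) * rc2 = rc1 * (rt - 1))
    (huR : ru = rm + rt)
    (hεm : 2 * rt ≤ ε * rm)
    (hF7R : ru * rdOo ≤ rt * rdU)
    (hF5R : 2 * rmOi + rA ≤ rdOi)
    (hF6R : 2 * rB + rA ≤ rdU)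
    (hF4R : rmOi ≤ rmO)
    (hSform : S = α * (rC * rdOi + rc1 * rdU) - (3*α-1) * (rC * rmOi + rc1 * rA + rc2 * rB))
    (hcovOform : covO = α * (rdOi + rdOo) - (3*α-1) * rmO)
    (hSle : S ≤ rC * covO) :
    (1 - ε) * (rC * covO) ≤ S := by
  have hupos : (0:ℝ) < ru := by linarith
  have hu1pos : (0:ℝ) < ru - 1 := by linarith
  have stepA : rC * rdOo ≤ rc1 * rdU := by
    have h' : ru * (rC * rdOo) ≤ ru * (rc1 * rdU) := by
      calc ru * (rC * rdOo) = rC * (ru * rdOo) := by ring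
        _ ≤ rC * (rt * rdU) := mul_le_mul_of_nonneg_left hF7R hCnn
        _ = (rC * rt) * rdU := by ring
        _ = (ru * rc1) * rdU := by rw [e1R]
        _ = ru * (rc1 * rdU) := by ring
    exact le_of_mul_le_mul_left h' hupos
  have hX1' : (2 + ε) * rt ≤ ε * ru := by
    rw [huR]
    linarith only [hεm]
  have stepX1 : (2 + ε) * rc1 ≤ ε * rC := by
    have h' : ru * ((2 + ε) * rc1) ≤ ru * (ε * rC) := by
      calc ru * ((2 + ε) * rc1) = (2 + ε) * (ru * rc1) := by ring
        _ = (2 + ε) * (rC * rt) := by rw [e1R]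
        _ = rC * ((2 + ε) * rt) := by ring
        _ ≤ rC * (ε * ru) := mul_le_mul_of_nonneg_left hX1' hCnn
        _ = ru * (ε * rC) := by ring
    exact le_of_mul_le_mul_left h' hupos
  have hX2' : (1 + ε) * (rt - 1) ≤ ε * (ru - 1) := by
    linarith only [hX1', htR, hε0.le]
  have stepX2 : (1 + ε) * rc2 ≤ ε * rc1 := by
    have h' : (ru - 1) * ((1 + ε) * rc2) ≤ (ru - 1) * (ε * rc1) := by
      calc (ru - 1) * ((1 + ε) * rc2) = (1 + ε) * ((ru - 1) * rc2) := by ring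
        _ = (1 + ε) * (rc1 * (rt - 1)) := by rw [e2R]
        _ = rc1 * ((1 + ε) * (rt - 1)) := by ring
        _ ≤ rc1 * (ε * (ru - 1)) := mul_le_mul_of_nonneg_left hX2' hc1nn
        _ = (ru - 1) * (ε * rc1) := by ring
    exact le_of_mul_le_mul_left h' hu1pos
  have hS1 : α * ((rC - rc1) * rA + 2 * (rc1 - rc2) * rB) ≤ S := by
    rw [hSform]
    have p1 : (0:ℝ) ≤ α * (rC * (rdOi - 2 * rmOi - rA)) :=
      mul_nonneg (by linarith) (mul_nonneg hCnn (by linarith))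
    have p2 : (0:ℝ) ≤ α * (rc1 * (rdU - 2 * rB - rA)) :=
      mul_nonneg (by linarith) (mul_nonneg hc1nn (by linarith))
    have p3 : (0:ℝ) ≤ (1 - α) * (rC * rmOi + rc1 * rA + rc2 * rB) :=
      mul_nonneg (by linarith) (by
        have w1 := mul_nonneg hCnn hmOinn
        have w2 := mul_nonneg hc1nn hAnn
        have w3 := mul_nonneg hc2nn hBnn
        linarith only [w1, w2, w3])
    nlinarith [p1, p2, p3]
  have hS3 : rC * covO - 2 * α * (rc1 * rA + rc2 * rB) ≤ S := by
    rw [hSform, hcovOform]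
    have q1 : (0:ℝ) ≤ α * (rc1 * rdU - rC * rdOo) :=
      mul_nonneg (by linarith) (by linarith only [stepA])
    have q2 : (0:ℝ) ≤ (1 - α) * (rc1 * rA + rc2 * rB) :=
      mul_nonneg (by linarith) (by
        have w2 := mul_nonneg hc1nn hAnn
        have w3 := mul_nonneg hc2nn hBnn
        linarith only [w2, w3])
    have q3 : (0:ℝ) ≤ (3 * α - 1) * (rC * (rmO - rmOi)) :=
      mul_nonneg (by linarith) (mul_nonneg hCnn (by linarith))
    nlinarith [q1, q2, q3]
  have hS4 : 2 * α * (rc1 * rA + rc2 * rB) ≤ ε * (rC * covO) := by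
    have hlow : α * ((rC - rc1) * rA + 2 * (rc1 - rc2) * rB) ≤ rC * covO :=
      le_trans hS1 hSle
    have hεlow : ε * (α * ((rC - rc1) * rA + 2 * (rc1 - rc2) * rB)) ≤ ε * (rC * covO) :=
      mul_le_mul_of_nonneg_left hlow hε0.le
    refine le_trans ?_ hεlow
    have r1 : (0:ℝ) ≤ (α * rA) * (ε * rC - (2 + ε) * rc1) :=
      mul_nonneg (mul_nonneg (by linarith) hAnn) (by linarith only [stepX1])
    have r2 : (0:ℝ) ≤ (α * rB) * (ε * rc1 - (1 + ε) * rc2) :=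
      mul_nonneg (mul_nonneg (by linarith) hBnn) (by linarith only [stepX2])
    nlinarith [r1, r2]
  linarith only [hS3, hS4]

end Helpers

set_option maxHeartbeats 2000000 in
theorem stmt8 {V : Type*} [Fintype V] [DecidableEq V] (G : SimpleGraph V)
    [DecidableRel G.Adj] (α ε : ℝ) (hα0 : 1 / 3 ≤ α) (hα1 : α ≤ 1)
    (hε0 : 0 < ε) (hε1 : ε < 1)
    (k : ℕ) (hk : k + ⌈(4 * (k : ℝ)) / ε ^ 2⌉₊ ≤ Fintype.card V)
    (V' : Finset V) (hV'card : V'.card = k + ⌈(4 * (k : ℝ)) / ε ^ 2⌉₊)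
    (hV'top : ∀ u ∈ V', ∀ w ∉ V', G.degree w ≤ G.degree u)
    (O : Finset V) (hO : O.card = k)
    (hOopt : ∀ O' : Finset V, O'.card = k → cov G α O' ≤ cov G α O) :
    (1 / (((V' \ (O ∩ V')).card.choose (O \ V').card : ℝ))) *
        ∑ T ∈ (V' \ (O ∩ V')).powersetCard (O \ V').card, cov G α ((O ∩ V') ∪ T)
      ≥ (1 - ε) * cov G α O := by
  classical
  set m : ℕ := ⌈(4 * (k : ℝ)) / ε ^ 2⌉₊ with hm
  set Oi : Finset V := O ∩ V' with hOi
  set Oo : Finset V := O \ V' with hOo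
  set U : Finset V := V' \ Oi with hU
  set t : ℕ := Oo.card with ht
  -- basic set facts
  have hOiV' : Oi ⊆ V' := inter_subset_right
  have hOiO : Oi ⊆ O := inter_subset_left
  have hdisj : Disjoint Oi U := disjoint_sdiff
  have hsplit : Oi.card + t = k := by
    have h := card_inter_add_card_sdiff O V'
    rw [hO] at h
    exact h
  have htk : t ≤ k := by omega
  have hUcard : U.card = m + t := by
    rw [hU, card_sdiff_of_subset hOiV', hV'card]
    omega
  have hcovO : 0 ≤ cov G α O := cov_nonneg G α hα0 hα1 O
  by_cases ht0 : t = 0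
  · -- trivial case
    rw [ht0]
    have hOoempty : Oo = ∅ := card_eq_zero.mp ht0
    have hOsub : O ⊆ V' := by
      intro x hx
      by_contra hxn
      have : x ∈ Oo := mem_sdiff.mpr ⟨hx, hxn⟩
      simp [hOoempty] at this
    have hOiO' : Oi = O := inter_eq_left.mpr hOsub
    simp only [powersetCard_zero, Nat.choose_zero_right, Nat.cast_one, sum_singleton,
      union_empty, hOiO']
    nlinarith
  -- main case
  have ht1 : 1 ≤ t := by omega
  have hk1 : 1 ≤ k := by omega
  have hm1 : 1 ≤ m := by
    rw [hm]
    refine Nat.one_le_iff_ne_zero.mpr (fun h => ?_)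
    rw [Nat.ceil_eq_zero] at h
    have : (0:ℝ) < 4 * k / ε ^ 2 := by positivity
    linarith
  have htu : t ≤ U.card := by omega
  set u : ℕ := U.card with hu
  set C : ℕ := u.choose t with hC
  set c1 : ℕ := (u - 1).choose (t - 1) with hc1
  set c2 : ℕ := if 2 ≤ t then (u - 2).choose (t - 2) else 0 with hc2
  have hCpos : 0 < C := Nat.choose_pos htu
  -- choose identities
  have hI1 : u * c1 = C * t := by
    rw [hC, hc1]
    have := Nat.add_one_mul_choose_eq (u - 1) (t - 1)
    have hu' : u - 1 + 1 = u := by omega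
    have ht' : t - 1 + 1 = t := by omega
    rw [hu', ht'] at this
    exact this
  have hI2 : (u - 1) * c2 = c1 * (t - 1) := by
    rw [hc1, hc2]
    by_cases h2t : 2 ≤ t
    · rw [if_pos h2t]
      have := Nat.add_one_mul_choose_eq (u - 2) (t - 2)
      have hu' : u - 2 + 1 = u - 1 := by omega
      have ht' : t - 2 + 1 = t - 1 := by omega
      rw [hu', ht'] at this
      exact this
    · rw [if_neg h2t]
      have : t - 1 = 0 := by omega
      rw [this]
      simp
  -- optimality: each O_i ∪ T has cardinality k
  have hF2 : ∀ T ∈ U.powersetCard t, cov G α (Oi ∪ T) ≤ cov G α O := by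
    intro T hT
    rw [mem_powersetCard] at hT
    apply hOopt
    rw [card_union_of_disjoint (disjoint_of_subset_right hT.1 hdisj), hT.2]
    omega
  have hSle : ∑ T ∈ U.powersetCard t, cov G α (Oi ∪ T) ≤ (C : ℝ) * cov G α O := by
    calc ∑ T ∈ U.powersetCard t, cov G α (Oi ∪ T)
        ≤ ∑ _T ∈ U.powersetCard t, cov G α O := Finset.sum_le_sum hF2
      _ = (C : ℝ) * cov G α O := by rw [Finset.sum_const, card_powersetCard, nsmul_eq_mul]
  -- named natural quantities
  set dOi : ℕ := ∑ v ∈ Oi, G.degree v with hdOi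
  set dU : ℕ := ∑ v ∈ U, G.degree v with hdU
  set dOo : ℕ := ∑ v ∈ Oo, G.degree v with hdOo
  set nA : ℕ := mBtw G Oi U with hnA
  set nB : ℕ := mIn G U with hnB
  set nmOi : ℕ := mIn G Oi with hnmOi
  set nmO : ℕ := mIn G O with hnmO
  set S : ℝ := ∑ T ∈ U.powersetCard t, cov G α (Oi ∪ T) with hS
  -- the summation formula
  have hSform : S = α * ((C:ℝ) * dOi + c1 * dU)
      - (3*α-1) * ((C:ℝ) * nmOi + c1 * nA + c2 * nB) := by
    rw [hS]
    have e1 : ∀ T ∈ U.powersetCard t, cov G α (Oi ∪ T)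
        = α * ((∑ v ∈ Oi ∪ T, G.degree v : ℕ) : ℝ) - (3*α-1) * (mIn G (Oi ∪ T) : ℝ) := by
      intro T _
      rw [cov_eq]
      push_cast
      ring
    rw [Finset.sum_congr rfl e1, Finset.sum_sub_distrib, ← Finset.mul_sum, ← Finset.mul_sum,
      ← Nat.cast_sum, ← Nat.cast_sum, sum_degSum G Oi U hdisj ht1, sum_mIn G Oi U hdisj ht1 htu,
      ← hu, ← hC, ← hc1, ← hc2, ← hdOi, ← hdU, ← hnA, ← hnB, ← hnmOi]
    push_cast
    ring
  -- cov O formula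
  have hOun : Oi ∪ Oo = O := by
    ext x
    simp only [hOi, hOo, mem_union, mem_inter, mem_sdiff]
    tauto
  have hdisjOO : Disjoint Oi Oo := by
    rw [hOi, hOo]
    exact disjoint_of_subset_left inter_subset_right disjoint_sdiff_self_right
  have hcovOform : cov G α O = α * ((dOi:ℝ) + dOo) - (3*α-1) * (nmO:ℝ) := by
    rw [cov_eq]
    have : ∑ v ∈ O, (G.degree v : ℝ) = (dOi:ℝ) + (dOo:ℝ) := by
      rw [← hOun, Finset.sum_union hdisjOO, hdOi, hdOo]
      push_cast
      ring
    rw [this, hnmO]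
  -- degree comparisons
  have hF7 : u * dOo ≤ t * dU := by
    have hvw : ∀ w ∈ Oo, u * G.degree w ≤ dU := by
      intro w hw
      have hwV : w ∉ V' := (mem_sdiff.mp hw).2
      calc u * G.degree w = ∑ _v ∈ U, G.degree w := by rw [Finset.sum_const, smul_eq_mul, hu]
        _ ≤ dU := Finset.sum_le_sum (fun v hv => hV'top v (mem_sdiff.mp hv).1 w hwV)
    calc u * dOo = ∑ w ∈ Oo, u * G.degree w := by rw [hdOo, Finset.mul_sum]
      _ ≤ ∑ _w ∈ Oo, dU := Finset.sum_le_sum hvw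
      _ = t * dU := by rw [Finset.sum_const, smul_eq_mul, ht]
  have hUc : U ⊆ Oiᶜ := fun x hx => Finset.mem_compl.mpr (Finset.disjoint_right.mp hdisj hx)
  have hOic : Oi ⊆ Uᶜ := fun x hx => Finset.mem_compl.mpr (Finset.disjoint_left.mp hdisj hx)
  have hF5 : 2 * nmOi + nA ≤ dOi := by
    rw [hdOi, handshake G Oi, hnmOi, hnA]
    have := mBtw_mono_right G hUc (X := Oi)
    omega
  have hF6 : 2 * nB + nA ≤ dU := by
    rw [hdU, handshake G U, hnB, hnA, mBtw_comm G Oi U]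
    have := mBtw_mono_right G hOic (X := U)
    omega
  have hF4 : nmOi ≤ nmO := mIn_mono G hOiO
  -- real versions
  have hu2 : 2 ≤ u := by omega
  have hCnn : (0:ℝ) ≤ C := Nat.cast_nonneg _
  have e1R : (u:ℝ) * c1 = (C:ℝ) * t := by exact_mod_cast hI1
  have e2R : ((u:ℝ) - 1) * c2 = (c1:ℝ) * ((t:ℝ) - 1) := by
    have h := congrArg (Nat.cast : ℕ → ℝ) hI2
    rw [Nat.cast_mul, Nat.cast_mul, Nat.cast_sub (by omega : 1 ≤ u), Nat.cast_sub ht1,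
      Nat.cast_one] at h
    exact h
  have huR : (u:ℝ) = (m:ℝ) + t := by exact_mod_cast hUcard
  have hF7R : (u:ℝ) * dOo ≤ (t:ℝ) * dU := by exact_mod_cast hF7
  have hF5R : 2 * (nmOi:ℝ) + nA ≤ dOi := by exact_mod_cast hF5
  have hF6R : 2 * (nB:ℝ) + nA ≤ dU := by exact_mod_cast hF6
  have hF4R : (nmOi:ℝ) ≤ nmO := by exact_mod_cast hF4
  have htR : (1:ℝ) ≤ t := by exact_mod_cast ht1
  have htkR : (t:ℝ) ≤ k := by exact_mod_cast htk
  have hu2R : (2:ℝ) ≤ u := by exact_mod_cast hu2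
  have hceil : (4 * (k:ℝ)) / ε ^ 2 ≤ m := by rw [hm]; exact Nat.le_ceil _
  have h4k : 4 * (k:ℝ) ≤ ε ^ 2 * m := by
    rw [div_le_iff₀ (by positivity)] at hceil
    linarith only [hceil]
  have hεm : 2 * (t:ℝ) ≤ ε * m := by
    have hprod : (0:ℝ) ≤ (ε - ε^2) * m :=
      mul_nonneg (by nlinarith [hε0, hε1] : (0:ℝ) ≤ ε - ε^2) (Nat.cast_nonneg m)
    linarith only [h4k, hprod, htkR]
  have key : (1 - ε) * ((C:ℝ) * cov G α O) ≤ S :=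
    final_arith α ε C c1 c2 t u m dOi dU dOo nA nB nmOi nmO S (cov G α O)
      hα0 hα1 hε0 hε1 hCnn (Nat.cast_nonneg _) (Nat.cast_nonneg _) (Nat.cast_nonneg _)
      (Nat.cast_nonneg _) (Nat.cast_nonneg _) htR hu2R e1R e2R huR hεm hF7R hF5R hF6R hF4R hSform hcovOform hSle
  have hCposR : (0:ℝ) < C := by exact_mod_cast hCpos
  rw [ge_iff_le, one_div, inv_mul_eq_div, le_div_iff₀ hCposR]
  calc (1 - ε) * cov G α O * C = (1 - ε) * ((C:ℝ) * cov G α O) := by ring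
    _ ≤ S := key
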